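/- Let O be an ontology. If every sequence of classical rule applications starting from O is finite, then every sequence of pinpointing rule applications starting from O^pin is finite; that is, termination of a consequence-based algorithm transfers to its pinpointing extension. -/

import Mathlib

/-- Monotone Boolean formulas over propositional variables of type `V`. -/
inductive MBF (V : Type) : Type
  | var : V → MBF V
  | top : MBF V
  | bot : MBF V
  | and : MBF V → MBF V → MBF V
  | or  : MBF V → MBF V → MBF V

/-- Satisfaction of a monotone Boolean formula by a valuation (a set of variables). -/
def MBF.sat {V : Type} (v : Set V) : MBF V → Prop
  | .var p => p ∈ v
  | .top => True
  | .bot => False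
  | .and φ ψ => φ.sat v ∧ ψ.sat v
  | .or φ ψ => φ.sat v ∨ ψ.sat v

/-- `φ` entails `ψ`: every valuation satisfying `φ` satisfies `ψ`. -/
def MBF.entails {V : Type} (φ ψ : MBF V) : Prop :=
  ∀ v : Set V, φ.sat v → ψ.sat v

/-- A rule: a pair of finite sets of consequences (premises and results). -/
structure Rule (C : Type) where
  pre : Finset C
  res : Finset C

/-- A rule `R` is applicable to a state `A` if `pre R ⊆ A` and `res R ⊄ A`. -/
def applicable {C : Type} (R : Rule C) (A : Set C) : Prop :=
  ↑R.pre ⊆ A ∧ ¬ (↑R.res ⊆ A)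

/-- Classical rule application: `A →_R B`. -/
def step {C : Type} (R : Rule C) (A B : Set C) : Prop :=
  applicable R A ∧ B = A ∪ ↑R.res

/-- One step with some rule from the fixed set of rules `Rs`. -/
def stepAny {C : Type} (Rs : Set (Rule C)) (A B : Set C) : Prop :=
  ∃ R ∈ Rs, step R A B

/-- Reflexive-transitive closure of classical rule application: `A →* B`. -/
def steps {C : Type} (Rs : Set (Rule C)) : Set C → Set C → Prop :=
  Relation.ReflTransGen (stepAny Rs)

/-- A state is saturated if no rule (from `Rs`) is applicable to it. -/
def saturated {C : Type} (Rs : Set (Rule C)) (A : Set C) : Prop :=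
  ∀ R ∈ Rs, ¬ applicable R A

/-- A pinpointing state: a labelling of a finite set of consequences with
monotone Boolean formulas (`none` = unlabelled). -/
structure PState (C V : Type) where
  lab : C → Option (MBF V)
  finite : {c : C | lab c ≠ none}.Finite

/-- The label of `α` in `A`, which is `⊥` if `α` is unlabelled. -/
def PState.labOf {C V : Type} (A : PState C V) (α : C) : MBF V :=
  (A.lab α).getD .bot

/-- `fm(X, A)`: the conjunction of the labels of the elements of `X`. -/
noncomputable def fm {C V : Type} (X : Finset C) (A : PState C V) : MBF V :=
  (X.toList.map A.labOf).foldr .and .top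

/-- `R` is pinpointing applicable to `A` if `fm(pre R, A)` does not entail `fm(res R, A)`. -/
def pinApplicable {C V : Type} (R : Rule C) (A : PState C V) : Prop :=
  ¬ (fm R.pre A).entails (fm R.res A)

open Classical in
/-- Pinpointing rule application `A ⇀_R B`: each `α ∈ res R` is relabelled with
`φ_α ∨ fm(pre R, A)` (with `φ_α = ⊥` if `α` was unlabelled); all other labels unchanged. -/
def pinStep {C V : Type} (R : Rule C) (A B : PState C V) : Prop :=
  pinApplicable R A ∧
  ∀ α : C, B.lab α =
    if α ∈ R.res then some ((A.labOf α).or (fm R.pre A)) else A.lab α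

/-- One pinpointing step with some rule from `Rs`. -/
def pinStepAny {C V : Type} (Rs : Set (Rule C)) (A B : PState C V) : Prop :=
  ∃ R ∈ Rs, pinStep R A B

/-- Reflexive-transitive closure of pinpointing rule application: `A ⇀* B`. -/
def pinSteps {C V : Type} (Rs : Set (Rule C)) : PState C V → PState C V → Prop :=
  Relation.ReflTransGen (pinStepAny Rs)

/-- A pinpointing state is pinpointing saturated if no rule is pinpointing applicable. -/
def pinSaturated {C V : Type} (Rs : Set (Rule C)) (A : PState C V) : Prop :=
  ∀ R ∈ Rs, ¬ pinApplicable R A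

/-- The projection `A_V` of a pinpointing state under a valuation `v`. -/
def PState.proj {C V : Type} (A : PState C V) (v : Set V) : Set C :=
  {α | ∃ φ, A.lab α = some φ ∧ φ.sat v}

open Classical in
/-- `O^pin`: the initial pinpointing state labelling each axiom `α ∈ O` with the
propositional variable `labv α`. -/
noncomputable def initPState {C V : Type} (labv : C → V) (O : Finset C) : PState C V :=
  ⟨fun α => if α ∈ O then some (.var (labv α)) else none,
   Set.Finite.subset O.finite_toSet (by
     intro c hc
     simp only [Set.mem_setOf_eq, ne_eq, ite_eq_right_iff, not_forall] at hc
     exact hc.choose)⟩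


/-! ### Auxiliary material for the proof of `stmt6` -/

/-- The variables occurring in a monotone Boolean formula. -/
def MBF.vars {V : Type} : MBF V → Set V
  | .var p => {p}
  | .top => ∅
  | .bot => ∅
  | .and φ ψ => φ.vars ∪ ψ.vars
  | .or φ ψ => φ.vars ∪ ψ.vars

lemma MBF.sat_congr {V : Type} {v w : Set V} :
    ∀ φ : MBF V, (∀ p ∈ φ.vars, (p ∈ v ↔ p ∈ w)) → (φ.sat v ↔ φ.sat w) := by
  intro φ
  induction φ with
  | var p => intro h; simpa [MBF.sat, MBF.vars] using h p (by simp [MBF.vars])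
  | top => intro _; simp [MBF.sat]
  | bot => intro _; simp [MBF.sat]
  | and φ ψ ihφ ihψ =>
      intro h
      simp only [MBF.sat]
      rw [ihφ (fun p hp => h p (Or.inl hp)), ihψ (fun p hp => h p (Or.inr hp))]
  | or φ ψ ihφ ihψ =>
      intro h
      simp only [MBF.sat]
      rw [ihφ (fun p hp => h p (Or.inl hp)), ihψ (fun p hp => h p (Or.inr hp))]

lemma mem_proj_iff {C V : Type} (A : PState C V) (v : Set V) (α : C) :
    α ∈ A.proj v ↔ (A.labOf α).sat v := by
  unfold PState.proj PState.labOf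
  constructor
  · rintro ⟨φ, h1, h2⟩; rw [h1]; exact h2
  · intro hs
    cases hA : A.lab α with
    | none => rw [hA] at hs; exact absurd hs (by simp [MBF.sat, Option.getD])
    | some φ => exact ⟨φ, hA, by rwa [hA] at hs⟩

lemma sat_foldr {V C : Type} (v : Set V) (f : C → MBF V) :
    ∀ l : List C, (((l.map f).foldr .and .top : MBF V).sat v) ↔ ∀ x ∈ l, (f x).sat v := by
  intro l
  induction l with
  | nil => simp [MBF.sat]
  | cons a l ih => simp [MBF.sat, ih]

lemma sat_fm_iff {C V : Type} (X : Finset C) (A : PState C V) (v : Set V) :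
    (fm X A).sat v ↔ ∀ α ∈ X, (A.labOf α).sat v := by
  unfold fm
  rw [sat_foldr]
  simp [Finset.mem_toList]

lemma vars_foldr {V C : Type} (f : C → MBF V) (S : Set V) :
    ∀ l : List C, (∀ x ∈ l, (f x).vars ⊆ S) →
      (((l.map f).foldr .and .top : MBF V).vars ⊆ S) := by
  intro l
  induction l with
  | nil => simp [MBF.vars]
  | cons a l ih =>
      intro h
      simp only [List.map_cons, List.foldr_cons, MBF.vars, Set.union_subset_iff]
      exact ⟨h a (by simp), ih (fun x hx => h x (by simp [hx]))⟩

lemma vars_fm {C V : Type} (X : Finset C) (A : PState C V) (S : Set V)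
    (h : ∀ α, (A.labOf α).vars ⊆ S) : (fm X A).vars ⊆ S :=
  vars_foldr A.labOf S X.toList (fun x _ => h x)

open Classical in
lemma labOf_pinStep {C V : Type} {R : Rule C} {A B : PState C V} (hs : pinStep R A B) (α : C) :
    B.labOf α = if α ∈ R.res then (A.labOf α).or (fm R.pre A) else A.labOf α := by
  have h := hs.2 α
  unfold PState.labOf
  rw [h]
  split <;> simp [PState.labOf]

lemma proj_mono_pinStep {C V : Type} {R : Rule C} {A B : PState C V}
    (hs : pinStep R A B) (v : Set V) : A.proj v ⊆ B.proj v := by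
  intro α hα
  rw [mem_proj_iff] at hα ⊢
  rw [labOf_pinStep hs]
  split
  · exact Or.inl hα
  · exact hα

lemma proj_dichotomy {C V : Type} {R : Rule C} {A B : PState C V}
    (hs : pinStep R A B) (v : Set V) :
    B.proj v = A.proj v ∨ step R (A.proj v) (B.proj v) := by
  by_cases hc : ∃ α ∈ R.res, α ∈ B.proj v ∧ α ∉ A.proj v
  · right
    obtain ⟨α, hαres, hαB, hαA⟩ := hc
    have hpre : (fm R.pre A).sat v := by
      rw [mem_proj_iff] at hαB hαA
      rw [labOf_pinStep hs, if_pos hαres] at hαB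
      rcases hαB with h | h
      · exact absurd h hαA
      · exact h
    have hproj : B.proj v = A.proj v ∪ ↑R.res := by
      ext β
      rw [mem_proj_iff, labOf_pinStep hs]
      by_cases hβ : β ∈ R.res
      · simp only [if_pos hβ]
        constructor
        · intro _; exact Or.inr hβ
        · intro _; exact Or.inr hpre
      · simp only [if_neg hβ, Set.mem_union, ← mem_proj_iff]
        constructor
        · intro hm; exact Or.inl hm
        · rintro (hm | hm)
          · exact hm
          · exact absurd hm hβ
    refine ⟨⟨?_, ?_⟩, hproj⟩
    · intro β hβ
      rw [mem_proj_iff]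
      exact (sat_fm_iff R.pre A v).1 hpre β hβ
    · intro hsub
      exact hαA (hsub hαres)
  · left
    push_neg at hc
    apply Set.Subset.antisymm _ (proj_mono_pinStep hs v)
    intro β hβ
    rw [mem_proj_iff, labOf_pinStep hs] at hβ
    by_cases hβr : β ∈ R.res
    · refine hc β hβr ?_
      rw [mem_proj_iff, labOf_pinStep hs]
      exact hβ
    · rw [if_neg hβr] at hβ
      rw [mem_proj_iff]
      exact hβ

lemma compress {C : Type} (Rs : Set (Rule C)) (h : ℕ → Set C)
    (hstep : ∀ i, h (i + 1) = h i ∨ stepAny Rs (h i) (h (i + 1)))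
    (hinf : {i | h (i + 1) ≠ h i}.Infinite) :
    ∃ g : ℕ → Set C, g 0 = h 0 ∧ ∀ k, stepAny Rs (g k) (g (k + 1)) := by
  classical
  have hconst : ∀ d n, (∀ j, n ≤ j → j < n + d → h (j + 1) = h j) → h (n + d) = h n := by
    intro d
    induction d with
    | zero => intro n _; rfl
    | succ d ih =>
        intro n hj
        have : h (n + d + 1) = h (n + d) :=
          hj (n + d) (Nat.le_add_right _ _) (by omega)
        rw [show n + (d + 1) = n + d + 1 from rfl, this]
        exact ih n (fun j h1 h2 => hj j h1 (by omega))
  have hnext : ∀ n, ∃ m, n ≤ m ∧ h m = h n ∧ h (m + 1) ≠ h m := by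
    intro n
    have hex : ∃ m, n ≤ m ∧ h (m + 1) ≠ h m := by
      rcases hinf.exists_gt n with ⟨m, hm, hlt⟩
      exact ⟨m, le_of_lt hlt, hm⟩
    set m₀ := Nat.find hex with hm₀
    obtain ⟨h1, h2⟩ := Nat.find_spec hex
    refine ⟨m₀, h1, ?_, h2⟩
    have : ∀ j, n ≤ j → j < n + (m₀ - n) → h (j + 1) = h j := by
      intro j hj1 hj2
      by_contra hne
      exact absurd (Nat.find_min hex (by omega) : ¬ (n ≤ j ∧ h (j+1) ≠ h j))
        (fun hh => hh ⟨hj1, hne⟩)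
    have := hconst (m₀ - n) n this
    rwa [Nat.add_sub_cancel' h1] at this
  choose nxt hnxt1 hnxt2 hnxt3 using hnext
  let f : ℕ → ℕ := fun k => Nat.rec 0 (fun _ fk => nxt fk + 1) k
  refine ⟨fun k => h (f k), ?_, ?_⟩
  · show h (f 0) = h 0
    rfl
  · intro k
    show stepAny Rs (h (f k)) (h (f (k + 1)))
    have hfk : f (k + 1) = nxt (f k) + 1 := rfl
    rw [hfk]
    have hst := hstep (nxt (f k))
    rcases hst with he | hs
    · exact absurd he (hnxt3 (f k))
    · rw [hnxt2 (f k)] at hs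
      exact hs

/-- if every sequence of classical rule applications starting from `O`
is finite (there is no infinite sequence), then every sequence of pinpointing rule
applications starting from `O^pin` is finite. -/
theorem stmt6 {C V : Type} (Rs : Set (Rule C)) (labv : C → V)
    (hinj : Function.Injective labv) (O : Finset C)
    (h : ¬ ∃ g : ℕ → Set C, g 0 = ↑O ∧ ∀ i : ℕ, stepAny Rs (g i) (g (i + 1))) :
    ¬ ∃ g : ℕ → PState C V,
        g 0 = initPState labv O ∧ ∀ i : ℕ, pinStepAny Rs (g i) (g (i + 1)) := by
  classical
  rintro ⟨g, hg0, hgstep⟩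
  apply h
  choose R hR hpin using hgstep
  have hw : ∀ i, ∃ v : Set V, (fm (R i).pre (g i)).sat v ∧ ¬ (fm (R i).res (g i)).sat v := by
    intro i
    have hp := (hpin i).1
    unfold pinApplicable MBF.entails at hp
    push_neg at hp
    exact hp
  choose v hv1 hv2 using hw
  set F : Finset V := O.image labv with hF
  -- all labels along the sequence only use variables from F
  have hgood : ∀ i α, ((g i).labOf α).vars ⊆ ↑F := by
    intro i
    induction i with
    | zero =>
        intro α
        rw [hg0]
        unfold PState.labOf initPState
        simp only
        split
        · next hα =>
            intro p hp
            simp only [Option.getD_some, MBF.vars, Set.mem_singleton_iff] at hp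
            subst hp
            exact_mod_cast Finset.mem_image_of_mem labv hα
        · simp [MBF.vars]
    | succ i ih =>
        intro α
        rw [labOf_pinStep (hpin i)]
        split
        · exact Set.union_subset (ih α) (vars_fm _ _ _ ih)
        · exact ih α
  -- pigeonhole on the restriction of the witness valuations to F
  let Wf : ℕ → {S // S ∈ F.powerset} := fun i =>
    ⟨F.filter (· ∈ v i), Finset.mem_powerset.2 (Finset.filter_subset _ _)⟩
  obtain ⟨W, hWinf'⟩ := Finite.exists_infinite_fiber Wf
  set Fib : Set ℕ := Wf ⁻¹' {W} with hFibdef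
  have hWinf : Fib.Infinite := Set.infinite_coe_iff.mp hWinf'
  set w : Set V := ↑(W : Finset V) with hwdef
  -- transfer satisfaction from v i to w for fiber indices
  have htrans : ∀ i ∈ Fib, ∀ φ : MBF V, φ.vars ⊆ ↑F → (φ.sat (v i) ↔ φ.sat w) := by
    intro i hi φ hφ
    apply MBF.sat_congr
    intro p hp
    have hpF : p ∈ F := by exact_mod_cast hφ hp
    have hWi : F.filter (· ∈ v i) = (W : Finset V) := by
      have : Wf i = W := hi
      exact congrArg Subtype.val this
    constructor
    · intro hpv
      show p ∈ (W : Finset V)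
      rw [← hWi]
      exact Finset.mem_filter.2 ⟨hpF, hpv⟩
    · intro hpw
      have : p ∈ F.filter (· ∈ v i) := by rw [hWi]; exact_mod_cast hpw
      exact (Finset.mem_filter.1 this).2
  -- the projected sequence, padded with O
  set hseq : ℕ → Set C := fun i => ↑O ∪ (g i).proj w with hseqdef
  have hprojmono : ∀ i j, i ≤ j → (g i).proj w ⊆ (g j).proj w := by
    intro i j hij
    induction j with
    | zero => rw [Nat.le_zero.mp hij]
    | succ j ihj =>
        rcases Nat.lt_or_ge i (j + 1) with hlt | hge
        · exact (ihj (by omega)).trans (proj_mono_pinStep (hpin j) w)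
        · rw [Nat.le_antisymm hij hge]
  have hmono : ∀ i j, i ≤ j → hseq i ⊆ hseq j := fun i j hij =>
    Set.union_subset_union subset_rfl (hprojmono i j hij)
  -- each step of hseq is a stutter or a classical step
  have hstep0 : ∀ i, hseq (i + 1) = hseq i ∨ stepAny Rs (hseq i) (hseq (i + 1)) := by
    intro i
    rcases proj_dichotomy (hpin i) w with heq | ⟨⟨hpre, hnres⟩, heq⟩
    · left
      show ↑O ∪ (g (i + 1)).proj w = ↑O ∪ (g i).proj w
      rw [heq]
    · by_cases hres : ↑(R i).res ⊆ hseq i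
      · left
        show ↑O ∪ (g (i + 1)).proj w = ↑O ∪ (g i).proj w
        rw [heq, ← Set.union_assoc]
        exact Set.union_eq_self_of_subset_right hres
      · right
        refine ⟨R i, hR i, ⟨⟨?_, hres⟩, ?_⟩⟩
        · exact hpre.trans (Set.subset_union_right)
        · show ↑O ∪ (g (i + 1)).proj w = (↑O ∪ (g i).proj w) ∪ ↑(R i).res
          rw [heq, Set.union_assoc]
  -- at fiber indices the projection strictly grows
  have hgen : ∀ i ∈ Fib, ∃ α, α ∈ (g (i + 1)).proj w ∧ α ∉ (g i).proj w := by
    intro i hi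
    have h1 : (fm (R i).pre (g i)).sat w := by
      rw [← htrans i hi _ (vars_fm _ _ _ (hgood i))]
      exact hv1 i
    have h2 : ¬ (fm (R i).res (g i)).sat w := by
      rw [← htrans i hi _ (vars_fm _ _ _ (hgood i))]
      exact hv2 i
    rw [sat_fm_iff] at h2
    push_neg at h2
    obtain ⟨α, hαres, hαsat⟩ := h2
    refine ⟨α, ?_, ?_⟩
    · rw [mem_proj_iff, labOf_pinStep (hpin i), if_pos hαres]
      exact Or.inr h1
    · rw [mem_proj_iff]
      exact hαsat
  -- hseq changes infinitely often
  have hinf : {i | hseq (i + 1) ≠ hseq i}.Infinite := by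
    by_contra hfin
    rw [Set.not_infinite] at hfin
    obtain ⟨N, hN⟩ : ∃ N, ∀ i, N ≤ i → hseq (i + 1) = hseq i := by
      rcases hfin.bddAbove with ⟨N, hN⟩
      refine ⟨N + 1, fun i hi => ?_⟩
      by_contra hne
      have := hN (Set.mem_setOf_eq ▸ hne : i ∈ {i | hseq (i + 1) ≠ hseq i})
      omega
    have hconst : ∀ d, hseq (N + d) = hseq N := by
      intro d
      induction d with
      | zero => rfl
      | succ d ih => rw [show N + (d + 1) = (N + d) + 1 from rfl, hN (N + d) (by omega), ih]
    have hall : ∀ i, hseq i ⊆ hseq N := by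
      intro i
      rcases Nat.le_total i N with hle | hge
      · exact hmono i N hle
      · rw [show i = N + (i - N) by omega, hconst (i - N)]
    have hCne : Nonempty C := by
      obtain ⟨i, hi⟩ := hWinf.nonempty
      obtain ⟨α, _, _⟩ := hgen i hi
      exact ⟨α⟩
    have hch : ∀ i : ℕ, ∃ α : C, i ∈ Fib → (α ∈ (g (i + 1)).proj w ∧ α ∉ (g i).proj w) := by
      intro i
      by_cases hi : i ∈ Fib
      · obtain ⟨α, h1, h2⟩ := hgen i hi
        exact ⟨α, fun _ => ⟨h1, h2⟩⟩
      · exact ⟨Classical.arbitrary C, fun hi' => absurd hi' hi⟩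
    choose aw haw using hch
    have key : ∀ i j, i ∈ Fib → j ∈ Fib → i < j → aw i ≠ aw j := by
      intro i j hi hj hij hne
      have h1 := (haw i hi).1
      have h2 := (haw j hj).2
      have : aw i ∈ (g j).proj w := hprojmono (i + 1) j (by omega) h1
      rw [hne] at this
      exact h2 this
    have hinjOn : Set.InjOn aw Fib := by
      intro i hi j hj he
      by_contra hne
      rcases Nat.lt_or_ge i j with hlt | hge
      · exact key i j hi hj hlt he
      · exact key j i hj hi (by omega) he.symm
    have himg : (aw '' Fib).Infinite := Set.Infinite.image hinjOn hWinf
    apply himg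
    have hfinN : (hseq N).Finite := by
      apply Set.Finite.union O.finite_toSet
      apply (g N).finite.subset
      intro α hα
      obtain ⟨φ, hφ, _⟩ := hα
      simp [hφ]
    apply hfinN.subset
    rintro x ⟨i, hi, rfl⟩
    exact hall (i + 1) (Or.inr (haw i hi).1)
  obtain ⟨g', hg'0, hg's⟩ := compress Rs hseq hstep0 hinf
  refine ⟨g', ?_, hg's⟩
  rw [hg'0]
  show ↑O ∪ (g 0).proj w = ↑O
  rw [hg0]
  apply Set.union_eq_self_of_subset_right
  intro α hα
  obtain ⟨φ, hφ, _⟩ := hα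
  unfold initPState at hφ
  simp only at hφ
  by_contra hαO
  rw [if_neg (by simpa using hαO : ¬ α ∈ O)] at hφ
  exact Option.some_ne_none φ hφ.symm
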